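/- Let q be a prime power with 3 | q+1 and a ∈ F_{q²}* such that y := a^((q+1)/3) is a primitive 3rd root of unity in F_{q²}. Then for every integer s with 1 ≤ s ≤ q²-2, the sum Σ_{x ∈ F_{q²}} f(x)^s, where f(x) = a·x + x^(3q-2), equals a^(-(q+1)(3q-2)/6)·(1+y) if q is odd and s = (q²-1)/2, and equals 0 otherwise. -/

import Mathlib

private lemma aux_sum_pow (F : Type*) [Field F] [Fintype F] (E : ℕ) (hE : E ≠ 0) :
    ∑ x : F, x ^ E = if (Fintype.card F - 1) ∣ E then -1 else 0 := by
  classical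
  let φ : Fˣ ↪ F := ⟨fun x ↦ x, fun _ _ h => Units.ext h⟩
  have huniv : (Finset.univ.map φ) = Finset.univ \ {0} := by
    ext x
    simp only [Finset.mem_map, Finset.mem_univ, Function.Embedding.coeFn_mk, true_and,
      Finset.mem_sdiff, Finset.mem_singleton, φ]
    exact isUnit_iff_ne_zero
  calc ∑ x : F, x ^ E
      = ∑ x ∈ Finset.univ \ {(0 : F)}, x ^ E := by
        rw [← Finset.sum_sdiff (Finset.subset_univ {(0 : F)}), Finset.sum_singleton,
          zero_pow hE, add_zero]
    _ = ∑ x : Fˣ, ((x : F)) ^ E := by rw [← huniv, Finset.sum_map]; rfl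
    _ = _ := by rw [← FiniteField.sum_pow_units F E]

private lemma aux_frob (q : ℕ) (hq : IsPrimePow q) (F : Type*) [Field F] [Fintype F]
    (hF : Fintype.card F = q ^ 2) (u v : F) : (u + v) ^ q = u ^ q + v ^ q := by
  obtain ⟨p, k, hp, hk, rfl⟩ := hq
  have hp' : p.Prime := hp.nat_prime
  haveI : Fact p.Prime := ⟨hp'⟩
  haveI : CharP F (ringChar F) := ringChar.charP F
  obtain ⟨n, hrp, hcard⟩ := FiniteField.card F (ringChar F)
  have hdvd : ringChar F ∣ (p ^ k) ^ 2 := by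
    rw [← hF, hcard]
    exact dvd_pow_self _ n.ne_zero
  have h2 : ringChar F ∣ p := by
    rw [← pow_mul] at hdvd
    exact hrp.dvd_of_dvd_pow hdvd
  have hrpp : ringChar F = p := (Nat.prime_dvd_prime_iff_eq hrp hp').mp h2
  haveI : CharP F p := hrpp ▸ ringChar.charP F
  exact add_pow_char_pow u v p k

theorem power_sums_primitive_cube_root_case
    (q : ℕ) (hq : IsPrimePow q) (h3 : 3 ∣ q + 1)
    (F : Type*) [Field F] [Fintype F] (hF : Fintype.card F = q ^ 2)
    (a : F) (ha : a ≠ 0)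
    (hy1 : a ^ ((q + 1) / 3) ≠ 1) (hy3 : (a ^ ((q + 1) / 3)) ^ 3 = 1)
    (s : ℕ) (hs1 : 1 ≤ s) (hs2 : s ≤ q ^ 2 - 2) :
    ∑ x : F, (a * x + x ^ (3 * q - 2)) ^ s =
      if Odd q ∧ s = (q ^ 2 - 1) / 2 then
        (a ^ ((q + 1) * (3 * q - 2) / 6))⁻¹ * (1 + a ^ ((q + 1) / 3))
      else 0 := by
  classical
  have hq2 : 2 ≤ q := hq.two_le
  have hq4 : 4 ≤ q ^ 2 := by
    calc (4 : ℕ) = 2 ^ 2 := by norm_num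
      _ ≤ q ^ 2 := Nat.pow_le_pow_left hq2 2
  obtain ⟨m, hm⟩ := h3
  have hm2 : 1 ≤ m := by omega
  have hmq : (q + 1) / 3 = m := by omega
  rw [hmq] at hy1 hy3 ⊢
  have hchar : ∀ u v : F, (u + v) ^ q = u ^ q + v ^ q := aux_frob q hq F hF
  have hNcard : Fintype.card F - 1 = q ^ 2 - 1 := by rw [hF]
  have hN : q ^ 2 - 1 = (q - 1) * (q + 1) := by
    have h := Nat.sq_sub_sq q 1
    simpa [mul_comm] using h
  have haq1 : a ^ (q + 1) = 1 := by
    rw [hm, mul_comm 3 m, pow_mul, hy3]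
  have hy_sum : 1 + a ^ m + (a ^ m) ^ 2 = 0 := by
    have h0 : (a ^ m - 1) * ((a ^ m) ^ 2 + a ^ m + 1) = 0 := by linear_combination hy3
    rcases mul_eq_zero.mp h0 with h | h
    · exact absurd (by linear_combination h) hy1
    · linear_combination h
  have hfx : ∀ x : F, a * x + x ^ (3 * q - 2) = x * (a + x ^ (3 * q - 3)) := by
    intro x
    rw [show 3 * q - 2 = (3 * q - 3) + 1 from by omega, pow_succ]
    ring
  simp_rw [hfx]
  set D := 3 * q - 3 with hD
  have hD3 : D = 3 * (q - 1) := by omega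
  have hDm : D * m = q ^ 2 - 1 := by
    rw [hD3, hN, hm]; ring
  by_cases hds : D ∣ s
  · obtain ⟨t, rfl⟩ := hds
    have ht1 : 1 ≤ t := Nat.pos_of_ne_zero fun h => by subst h; simp at hs1
    have h3t : 3 * t ≤ q := by
      by_contra hcon
      push_neg at hcon
      have h2 : D * t = (q - 1) * (3 * t) := by rw [hD3]; ring
      have h4 : (q - 1) * (q + 1) ≤ (q - 1) * (3 * t) :=
        Nat.mul_le_mul_left _ (by omega)
      have h5 : q ^ 2 - 1 ≤ D * t := by rw [hN, h2]; exact h4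
      have h6 : q ^ 2 - 1 ≤ q ^ 2 - 2 := le_trans h5 hs2
      have hq4' : 4 ≤ q ^ 2 := hq4
      generalize hgen : q ^ 2 = Q at h6 hq4'
      omega
    set E := D * t * (3 * q + 1) with hE
    have hEpos : E ≠ 0 := by
      rw [hE]
      exact (Nat.mul_pos (Nat.mul_pos (show 0 < D by omega) ht1)
        (show 0 < 3 * q + 1 by omega)).ne'
    have key : ∀ x : F, (x * (a + x ^ D)) ^ (D * t) = a ^ (3 * q * t) * x ^ E := by
      intro x
      rcases eq_or_ne x 0 with rfl | hx
      · rw [zero_mul, zero_pow (fun h => hEpos (by rw [hE, h, zero_mul])),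
          zero_pow hEpos, mul_zero]
      · have hxN : x ^ (q ^ 2 - 1) = 1 := by
          have h := FiniteField.pow_card_sub_one_eq_one x hx
          rwa [hF] at h
        have hvm : (x ^ D) ^ m = 1 := by rw [← pow_mul, hDm, hxN]
        have hvq1 : (x ^ D) ^ (q + 1) = 1 := by
          rw [hm, mul_comm 3 m, pow_mul, hvm, one_pow]
        have haq : a ^ q * a = 1 := by rw [← pow_succ]; exact haq1
        have hvq : (x ^ D) ^ q * x ^ D = 1 := by rw [← pow_succ]; exact hvq1
        have hav : a + x ^ D ≠ 0 := by
          intro hcon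
          have hva : x ^ D = -a := by linear_combination hcon
          rw [hva] at hvm
          rcases Nat.even_or_odd m with hpar | hpar
          · rw [hpar.neg_pow] at hvm; exact hy1 hvm
          · rw [hpar.neg_pow] at hvm
            have hy4 : a ^ m = -1 := by linear_combination -hvm
            rw [hy4] at hy3 hy1
            have h21 : (-1 : F) = 1 := by linear_combination hy3
            exact hy1 h21
        have hfq : (a + x ^ D) ^ q = (a + x ^ D) * (a ^ q * (x ^ D) ^ q) := by
          rw [hchar a (x ^ D)]
          linear_combination (-((x ^ D) ^ q)) * haq + (-(a ^ q)) * hvq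
        have hfq1 : (a + x ^ D) ^ (q - 1) = a ^ q * (x ^ D) ^ q := by
          have h5 : (a + x ^ D) ^ (q - 1) * (a + x ^ D)
              = a ^ q * (x ^ D) ^ q * (a + x ^ D) := by
            rw [← pow_succ, show q - 1 + 1 = q from by omega, hfq]; ring
          exact mul_right_cancel₀ hav h5
        have hst : D * t = (q - 1) * (3 * t) := by rw [hD3]; ring
        calc (x * (a + x ^ D)) ^ (D * t)
            = x ^ (D * t) * ((a + x ^ D) ^ (q - 1)) ^ (3 * t) := by
              rw [mul_pow]; congr 1; rw [hst, pow_mul]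
          _ = x ^ (D * t) * (a ^ q * (x ^ D) ^ q) ^ (3 * t) := by rw [hfq1]
          _ = a ^ (3 * q * t) * x ^ E := by
              rw [mul_pow, ← pow_mul, ← pow_mul, ← pow_mul,
                show D * (q * (3 * t)) = D * t * (3 * q) from by ring,
                show q * (3 * t) = 3 * q * t from by ring,
                mul_left_comm, ← pow_add,
                show D * t + D * t * (3 * q) = D * t * (3 * q + 1) from by ring]
    simp_rw [key]
    rw [← Finset.mul_sum, aux_sum_pow F E hEpos, hNcard]
    by_cases h6t : 6 * t = q + 1
    · have h9 : 3 * q + 1 = 2 * (9 * t - 1) := by omega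
      have hdvd : (q ^ 2 - 1) ∣ E := by
        refine ⟨9 * t - 1, ?_⟩
        rw [hE, hN, hD3, h9, ← h6t]; ring
      rw [if_pos hdvd]
      have hodd : Odd q := ⟨3 * t - 1, by omega⟩
      have hshalf : D * t = (q ^ 2 - 1) / 2 := by
        have h2 : 2 * (D * t) = q ^ 2 - 1 := by rw [hD3, hN, ← h6t]; ring
        rw [← h2]
        exact (Nat.mul_div_cancel_left _ (by norm_num)).symm
      rw [if_pos (⟨hodd, hshalf⟩ : Odd q ∧ D * t = (q ^ 2 - 1) / 2)]
      have hB : (q + 1) * (3 * q - 2) / 6 = t * (3 * q - 2) := by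
        rw [← h6t, mul_assoc]
        exact Nat.mul_div_cancel_left _ (by norm_num)
      rw [hB]
      set B := 3 * q - 2 with hBdef
      have hB2 : B + 2 = 3 * q := by omega
      have hexp : 3 * q * t + t * B + 2 * t = (q + 1) * q := by
        calc 3 * q * t + t * B + 2 * t = 3 * q * t + t * (B + 2) := by ring
          _ = 3 * q * t + t * (3 * q) := by rw [hB2]
          _ = (6 * t) * q := by ring
          _ = (q + 1) * q := by rw [h6t]
      have hone : a ^ (3 * q * t) * a ^ (t * B) * a ^ (2 * t) = 1 := by
        rw [← pow_add, ← pow_add, hexp, pow_mul, haq1, one_pow]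
      have hm2t : m = 2 * t := by omega
      rw [hm2t] at hy_sum hy3 ⊢
      have hQ : a ^ (t * B) ≠ 0 := pow_ne_zero _ ha
      have hY : a ^ (2 * t) ≠ 0 := pow_ne_zero _ ha
      have hPQ : a ^ (3 * q * t) * a ^ (t * B) = (a ^ (2 * t)) ^ 2 := by
        have h7 : a ^ (3 * q * t) * a ^ (t * B) * a ^ (2 * t)
            = (a ^ (2 * t)) ^ 2 * a ^ (2 * t) := by
          rw [hone, ← pow_succ]
          exact hy3.symm
        exact mul_right_cancel₀ hY h7
      have h1y : (1 : F) + a ^ (2 * t) = -((a ^ (2 * t)) ^ 2) := by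
        linear_combination hy_sum
      have hcancel : (a ^ (t * B))⁻¹ * (a ^ (3 * q * t) * a ^ (t * B)) = a ^ (3 * q * t) := by
        rw [mul_comm (a ^ (3 * q * t)), ← mul_assoc, inv_mul_cancel₀ hQ, one_mul]
      rw [h1y, ← hPQ]
      field_simp
    · have hndvd : ¬ (q ^ 2 - 1) ∣ E := by
        intro hdvd
        have hNE : E + 6 * t * (q - 1) = (q ^ 2 - 1) * (9 * t) := by
          rw [hE, hD3, hN]; ring
        have heq2 : (q ^ 2 - 1) * (9 * t) - E = 6 * t * (q - 1) := by
          rw [← hNE]; exact Nat.add_sub_cancel_left _ _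
        have hdvd6 : (q ^ 2 - 1) ∣ 6 * t * (q - 1) :=
          heq2 ▸ Nat.dvd_sub (Dvd.intro (9 * t) rfl) hdvd
        rw [hN] at hdvd6
        have h7 : (q - 1) * (q + 1) ∣ (q - 1) * (6 * t) := by
          rw [show (q - 1) * (6 * t) = 6 * t * (q - 1) from by ring]
          exact hdvd6
        have h61 : (q + 1) ∣ 6 * t :=
          (Nat.mul_dvd_mul_iff_left (show 0 < q - 1 by omega)).mp h7
        obtain ⟨c, hc⟩ := h61
        have hcc : c = 0 ∨ c = 1 ∨ 2 ≤ c := by omega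
        rcases hcc with rfl | rfl | hcge
        · simp at hc; omega
        · rw [mul_one] at hc; exact h6t (by omega)
        · have h8 : (q + 1) * 2 ≤ (q + 1) * c := Nat.mul_le_mul_left _ hcge
          rw [← hc] at h8
          omega
      rw [if_neg hndvd, mul_zero, if_neg]
      rintro ⟨hodd, hshalf⟩
      obtain ⟨j, hj⟩ := hodd
      have heven : q + 1 = 2 * (j + 1) := by omega
      have h2 : 2 * (D * t) = q ^ 2 - 1 := by
        have hdvd2 : 2 ∣ q ^ 2 - 1 := by
          rw [hN, heven]; exact ⟨(q - 1) * (j + 1), by ring⟩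
        rw [hshalf, Nat.mul_div_cancel' hdvd2]
      rw [hD3, hN] at h2
      have h3' : (q - 1) * (6 * t) = (q - 1) * (q + 1) := by rw [← h2]; ring
      have h4' := Nat.eq_of_mul_eq_mul_left (show 0 < q - 1 by omega) h3'
      exact h6t (by omega)
  · rw [if_neg]
    swap
    · rintro ⟨hodd, hshalf⟩
      apply hds
      obtain ⟨j, hj⟩ := hodd
      have h6 : 6 ∣ q + 1 := by omega
      obtain ⟨u, hu⟩ := h6
      have heq : q ^ 2 - 1 = 2 * (D * u) := by
        rw [hN, hu, hD3]; ring
      refine ⟨u, ?_⟩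
      rw [hshalf, heq]
      exact Nat.mul_div_cancel_left _ (by norm_num)
    have hDdvd' : D ∣ q ^ 2 - 1 := ⟨m, hDm.symm⟩
    obtain ⟨g, hg⟩ := IsCyclic.exists_ofOrder_eq_natCard (α := Fˣ)
    have hcard' : Nat.card Fˣ = q ^ 2 - 1 := by
      rw [Nat.card_eq_fintype_card, Fintype.card_units, hF]
    set c : Fˣ := g ^ ((q ^ 2 - 1) / D) with hcdef
    have hdvd2 : (q ^ 2 - 1) / D ∣ q ^ 2 - 1 := Nat.div_dvd_of_dvd hDdvd'
    have hN0 : q ^ 2 - 1 ≠ 0 :=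
      Nat.sub_ne_zero_of_lt (lt_of_lt_of_le (by norm_num) hq4)
    have horder : orderOf c = D := by
      rw [hcdef, orderOf_pow, hg, hcard', Nat.gcd_eq_right hdvd2,
        Nat.div_div_self hDdvd' hN0]
    have hcd : (c : F) ^ D = 1 := by
      have h := pow_orderOf_eq_one c
      rw [horder] at h
      have h2 := congrArg (Units.val) h
      simpa using h2
    have hcs : (c : F) ^ s ≠ 1 := by
      intro hcon
      apply hds
      rw [← horder]
      apply orderOf_dvd_of_pow_eq_one
      exact Units.ext (by simpa using hcon)
    have hc0 : (c : F) ≠ 0 := Units.ne_zero c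
    set S := ∑ x : F, (x * (a + x ^ D)) ^ s with hS
    have hsub : (c : F) ^ s * S = S := by
      rw [hS, Finset.mul_sum]
      refine Fintype.sum_bijective (fun x => (c : F) * x) (mulLeft_bijective₀ _ hc0) _ _ ?_
      intro x
      rw [mul_pow (c : F) x D, hcd, one_mul, mul_assoc, mul_pow, mul_pow, ← mul_pow x]
    have h0 : ((c : F) ^ s - 1) * S = 0 := by
      rw [sub_mul, hsub, one_mul, sub_self]
    rcases mul_eq_zero.mp h0 with h | h
    · exact absurd (by linear_combination h) hcs
    · exact h
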